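/- Let X be a complex Banach space and let A, B, C, D be bounded linear operators on X satisfying (AC)² = (DB)(AC), (DB)² = (AC)(DB), B(AC)A = B(DB)A, and C(AC)D = C(DB)D. Then the g-Drazin spectrum of BD equals the g-Drazin spectrum of AC, i.e., {λ ∈ ℂ : λI − BD has no g-Drazin inverse} = {λ ∈ ℂ : λI − AC has no g-Drazin inverse}. -/

import Mathlib

/-- An element of a complex Banach algebra is quasinilpotent if its
spectral radius is zero. -/
def IsQuasinilpotentB {A : Type*} [NormedRing A] [NormedAlgebra ℂ A] (q : A) : Prop :=
  spectralRadius ℂ q = 0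

/-- `e` is a g-Drazin inverse of `a`. -/
def IsGDrazinInverseB {A : Type*} [NormedRing A] [NormedAlgebra ℂ A] (a e : A) : Prop :=
  e = e * a * e ∧ (∀ y : A, y * a = a * y → e * y = y * e) ∧
    IsQuasinilpotentB (a - a ^ 2 * e)

/-- The g-Drazin spectrum. -/
def gDrazinSpectrum {A : Type*} [NormedRing A] [NormedAlgebra ℂ A] (t : A) : Set ℂ :=
  {lam : ℂ | ¬ ∃ e, IsGDrazinInverseB (lam • (1 : A) - t) e}

open Filter Topology

section QP
variable {R : Type*} [NormedRing R] [NormedAlgebra ℂ R]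

lemma qnilB_iff {q : R} :
    IsQuasinilpotentB q ↔ ∀ μ : ℂ, μ ≠ 0 → IsUnit (μ • (1 : R) - q) := by
  constructor
  · intro h μ hμ
    have : μ ∉ spectrum ℂ q := by
      intro hm
      have h1 : (‖μ‖₊ : ENNReal) ≤ spectralRadius ℂ q := le_iSup₂ (α := ENNReal) μ hm
      rw [h, nonpos_iff_eq_zero] at h1
      simp only [ENNReal.coe_eq_zero, nnnorm_eq_zero] at h1
      exact hμ h1
    rw [spectrum.notMem_iff, Algebra.algebraMap_eq_smul_one] at this
    exact this
  · intro h
    have hs : spectrum ℂ q ⊆ {0} := by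
      intro μ hm
      by_contra hμ
      rw [Set.mem_singleton_iff] at hμ
      have := h μ hμ
      rw [spectrum.mem_iff, Algebra.algebraMap_eq_smul_one] at hm
      exact hm this
    rw [IsQuasinilpotentB, spectralRadius]
    rw [ENNReal.iSup_eq_zero]
    intro μ
    rw [ENNReal.iSup_eq_zero]
    intro hm
    have := hs hm
    simp_all
lemma qnilB_neg {q : R} (h : IsQuasinilpotentB q) : IsQuasinilpotentB (-q) := by
  rw [qnilB_iff] at h ⊢
  intro μ hμ
  have := (h (-μ) (neg_ne_zero.2 hμ)).neg
  rw [show -(-μ • (1:R) - q) = μ • (1:R) - -q by simp [neg_smul]; abel] at this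
  exact this
lemma unit_one_sub_qnil {n : R} (h : IsQuasinilpotentB n) : IsUnit (1 - n) := by
  simpa using (qnilB_iff.1 h 1 one_ne_zero)
lemma unit_one_add_qnil {n : R} (h : IsQuasinilpotentB n) : IsUnit (1 + n) := by
  have := unit_one_sub_qnil (qnilB_neg h)
  simpa [sub_neg_eq_add] using this
/-- Jacobson's lemma for units. -/
lemma unit_smul_sub_swap {μ : ℂ} (hμ : μ ≠ 0) {u v : R}
    (h : IsUnit (μ • (1 : R) - u * v)) : IsUnit (μ • (1 : R) - v * u) := by
  obtain ⟨m, hm⟩ := h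
  set c : R := ↑m⁻¹ with hc
  have hmc : (μ • (1 : R) - u * v) * c = 1 := by rw [← hm]; exact m.mul_inv
  have hcm : c * (μ • (1 : R) - u * v) = 1 := by rw [← hm]; exact m.inv_mul
  set g : R := μ⁻¹ • (1 + v * c * u) with hg
  have h1 : (μ • (1 : R) - v * u) * g = 1 := by
    rw [hg, mul_smul_comm]
    have key : (μ • (1 : R) - v * u) * (1 + v * c * u)
        = μ • (1:R) - v*u + v * ((μ • (1 : R) - u * v) * c) * u := by
      noncomm_ring
      try module
    rw [key, hmc]
    rw [show μ • (1:R) - v * u + v * 1 * u = μ • (1:R) by noncomm_ring]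
    rw [smul_smul, inv_mul_cancel₀ hμ, one_smul]
  have h2 : g * (μ • (1 : R) - v * u) = 1 := by
    rw [hg, smul_mul_assoc]
    have key : (1 + v * c * u) * (μ • (1 : R) - v * u)
        = μ • (1:R) - v*u + v * (c * (μ • (1 : R) - u * v)) * u := by
      noncomm_ring
      try module
    rw [key, hcm]
    rw [show μ • (1:R) - v * u + v * 1 * u = μ • (1:R) by noncomm_ring]
    rw [smul_smul, inv_mul_cancel₀ hμ, one_smul]
  exact ⟨⟨_, g, h1, h2⟩, rfl⟩
lemma qnilB_swap {u v : R} (h : IsQuasinilpotentB (u * v)) : IsQuasinilpotentB (v * u) := by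
  rw [qnilB_iff] at h ⊢
  exact fun μ hμ => unit_smul_sub_swap hμ (h μ hμ)


/-- Koliha decomposition witness: `p` is a spectral idempotent for `a`. -/
def IsQP (a p : R) : Prop :=
  p * p = p ∧ a * p = p * a ∧ IsQuasinilpotentB (a * p) ∧ IsUnit (a + p)

namespace IsQP

variable {a p : R}

lemma e_spec (h : IsQP a p) :
    ∃ e : R, a * e = 1 - p ∧ e * a = 1 - p ∧ e * p = 0 ∧ p * e = 0 ∧
      (∀ y : R, y * a = a * y → y * p = p * y → y * e = e * y) := by
  obtain ⟨hpp, hap, hq, hu⟩ := h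
  set u := hu.unit with hu'
  have huv : (u : R) = a + p := hu.unit_spec
  have hcomm : ∀ y : R, y * a = a * y → y * p = p * y →
      y * ((↑u⁻¹ : R) * (1 - p)) = (↑u⁻¹ : R) * (1 - p) * y := by
    intro y hya hyp
    have c1 : Commute y (u : R) := by
      rw [Commute, SemiconjBy, huv, mul_add, add_mul, hya, hyp]
    have c3 : Commute y (1 - p) := by
      rw [Commute, SemiconjBy, mul_sub, sub_mul, mul_one, one_mul, hyp]
    exact c1.units_inv_right.mul_right c3
  have key : a * ((↑u⁻¹ : R) * (1 - p)) = 1 - p := by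
    have c1 : Commute a (u : R) := by
      rw [Commute, SemiconjBy, huv, mul_add, add_mul, hap]
    have h1 : a * (1 - p) = (u : R) * (1 - p) := by
      rw [huv, add_mul, mul_sub, mul_sub, mul_one, mul_one, hpp]
      abel
    calc a * ((↑u⁻¹ : R) * (1 - p)) = a * (↑u⁻¹ : R) * (1 - p) := by rw [mul_assoc]
      _ = (↑u⁻¹ : R) * a * (1 - p) := by rw [c1.units_inv_right.eq]
      _ = (↑u⁻¹ : R) * ((u : R) * (1 - p)) := by rw [mul_assoc, h1]
      _ = (↑u⁻¹ : R) * (u : R) * (1 - p) := by rw [mul_assoc]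
      _ = 1 - p := by rw [u.inv_mul, one_mul]
  refine ⟨(↑u⁻¹ : R) * (1 - p), key, ?_, ?_, ?_, hcomm⟩
  · rw [← hcomm a rfl hap, key]
  · rw [mul_assoc, sub_mul, one_mul, hpp, sub_self, mul_zero]
  · rw [hcomm p hap.symm rfl, mul_assoc, sub_mul, one_mul, hpp, sub_self, mul_zero]

lemma unit_sub (h : IsQP a p) : IsUnit (a - p) := by
  obtain ⟨e, hae, hea, hep, hpe, hcomm⟩ := h.e_spec
  obtain ⟨hpp, hap, hq, hu⟩ := h
  obtain ⟨v, hv⟩ := unit_one_sub_qnil hq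
  have hvap : (v : R) = 1 - a * p := hv
  have cap : Commute a p := hap
  have cva : Commute a (v : R) := by
    have : Commute a (1 - a * p) := ((Commute.one_right a).sub_right ((Commute.refl a).mul_right cap))
    rwa [← hvap] at this
  have cvp : Commute p (v : R) := by
    have : Commute p (1 - a * p) := ((Commute.one_right p).sub_right (cap.symm.mul_right (Commute.refl p)))
    rwa [← hvap] at this
  set g : R := e - (↑v⁻¹ : R) * p with hg
  have haux : a * p - p = -((v:R) * p) := by
    rw [hvap, sub_mul, one_mul, mul_assoc, hpp]
    abel
  have h2 : (a - p) * p = -((v:R) * p) := by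
    rw [sub_mul, hpp]; exact haux
  have h2' : p * (a - p) = -((v:R) * p) := by
    rw [mul_sub, hpp, ← hap]; exact haux
  have hfwd : (a - p) * g = 1 := by
    have t1 : (a - p) * e = 1 - p := by rw [sub_mul, hae, hpe, sub_zero]
    have t2 : (a - p) * ((↑v⁻¹ : R) * p) = -p := by
      calc (a - p) * ((↑v⁻¹ : R) * p) = (a - p) * (↑v⁻¹ : R) * p := by rw [mul_assoc]
        _ = (↑v⁻¹ : R) * (a - p) * p := by
            congr 1
            have : Commute (a - p) (v : R) := cva.sub_left cvp
            exact this.units_inv_right.eq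
        _ = (↑v⁻¹ : R) * ((a - p) * p) := by rw [mul_assoc]
        _ = (↑v⁻¹ : R) * -((v:R) * p) := by rw [h2]
        _ = -((↑v⁻¹ : R) * ((v:R) * p)) := by rw [mul_neg]
        _ = -p := by rw [← mul_assoc, v.inv_mul, one_mul]
    rw [hg, mul_sub, t1, t2]
    abel
  have hbwd : g * (a - p) = 1 := by
    have t1 : e * (a - p) = 1 - p := by rw [mul_sub, hea, hep, sub_zero]
    have t2 : ((↑v⁻¹ : R) * p) * (a - p) = -p := by
      rw [mul_assoc, h2', mul_neg, ← mul_assoc, v.inv_mul, one_mul]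
    rw [hg, sub_mul, t1, t2]
    abel
  exact ⟨⟨a - p, g, hfwd, hbwd⟩, rfl⟩

lemma neg (h : IsQP a p) : IsQP (-a) p := by
  obtain ⟨hpp, hap, hq, hu⟩ := h
  refine ⟨hpp, by rw [neg_mul, mul_neg, hap], ?_, ?_⟩
  · rw [neg_mul]; exact qnilB_neg hq
  · have := (IsQP.unit_sub ⟨hpp, hap, hq, hu⟩).neg
    rwa [neg_sub, ← neg_add_eq_sub] at this

end IsQP

lemma idem_pow {p : R} (hpp : p * p = p) : ∀ n : ℕ, 1 ≤ n → p ^ n = p := by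
  intro n hn
  induction n with
  | zero => omega
  | succ m ih =>
    rcases Nat.eq_or_lt_of_le hn with h1 | h1
    · simp [← h1]
    · have hm : 1 ≤ m := by omega
      rw [pow_succ, ih hm, hpp]

lemma qnilB_conj {x : R} (z : Rˣ) (h : IsQuasinilpotentB x) :
    IsQuasinilpotentB ((z : R) * x * (↑z⁻¹ : R)) := by
  rw [qnilB_iff] at h ⊢
  intro μ hμ
  have key : μ • (1 : R) - (z : R) * x * (↑z⁻¹ : R)
      = (z : R) * (μ • (1 : R) - x) * (↑z⁻¹ : R) := by
    rw [mul_sub, sub_mul]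
    congr 1
    rw [mul_smul_comm, smul_mul_assoc, mul_one, z.mul_inv]
  rw [key]
  exact (z.isUnit.mul (h μ hμ)).mul z⁻¹.isUnit

namespace IsQP
variable {a p : R}

lemma conj (h : IsQP a p) (z : Rˣ) (hz : (z : R) * a = a * (z : R)) :
    IsQP a ((z : R) * p * (↑z⁻¹ : R)) := by
  obtain ⟨hpp, hap, hq, hu⟩ := h
  have cz : Commute (z : R) a := hz
  have hz' : (↑z⁻¹ : R) * a = a * (↑z⁻¹ : R) := cz.units_inv_left.eq
  have hq1 : a * ((z : R) * p * (↑z⁻¹ : R)) = (z : R) * (a * p) * (↑z⁻¹ : R) := by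
    calc a * ((z : R) * p * (↑z⁻¹ : R)) = (a * (z : R)) * p * (↑z⁻¹ : R) := by
          simp only [← mul_assoc]
      _ = ((z : R) * a) * p * (↑z⁻¹ : R) := by rw [hz]
      _ = (z : R) * (a * p) * (↑z⁻¹ : R) := by rw [mul_assoc (z:R) a p]
  refine ⟨?_, ?_, ?_, ?_⟩
  · calc ((z : R) * p * (↑z⁻¹ : R)) * ((z : R) * p * (↑z⁻¹ : R))
        = (z : R) * p * ((↑z⁻¹ : R) * ((z : R) * (p * (↑z⁻¹ : R)))) := by
          simp only [mul_assoc]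
      _ = (z : R) * p * (p * (↑z⁻¹ : R)) := by rw [Units.inv_mul_cancel_left]
      _ = (z : R) * (p * p) * (↑z⁻¹ : R) := by simp only [mul_assoc]
      _ = (z : R) * p * (↑z⁻¹ : R) := by rw [hpp]
  · rw [hq1]
    calc (z : R) * (a * p) * (↑z⁻¹ : R) = (z : R) * (p * a) * (↑z⁻¹ : R) := by rw [hap]
      _ = (z : R) * p * (a * (↑z⁻¹ : R)) := by simp only [mul_assoc]
      _ = (z : R) * p * ((↑z⁻¹ : R) * a) := by rw [hz']
      _ = (z : R) * p * (↑z⁻¹ : R) * a := by simp only [mul_assoc]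
  · rw [hq1]
    exact qnilB_conj z hq
  · have key : a + (z : R) * p * (↑z⁻¹ : R) = (z : R) * (a + p) * (↑z⁻¹ : R) := by
      rw [mul_add, add_mul]
      congr 1
      rw [hz, mul_assoc, z.mul_inv, mul_one]
    rw [key]
    exact (z.isUnit.mul hu).mul z⁻¹.isUnit

end IsQP

section Complete
variable [CompleteSpace R]

lemma qnilB_mul_commute {x y : R} (hx : IsQuasinilpotentB x) (hc : x * y = y * x) :
    IsQuasinilpotentB (x * y) := by
  have gel : Tendsto (fun n : ℕ => (‖x ^ n‖₊ : ENNReal) ^ (1 / n : ℝ)) atTop (𝓝 0) := by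
    have := spectrum.pow_nnnorm_pow_one_div_tendsto_nhds_spectralRadius x
    rwa [hx] at this
  have gel2 : Tendsto (fun n : ℕ => (‖x ^ n‖₊ : ENNReal) ^ (1 / n : ℝ) * (‖y‖₊ : ENNReal))
      atTop (𝓝 0) := by
    simpa using ENNReal.Tendsto.mul_const gel (Or.inr ENNReal.coe_ne_top)
  rw [IsQuasinilpotentB]
  refine le_antisymm ?_ zero_le
  refine le_trans (spectrum.spectralRadius_le_liminf_pow_nnnorm_pow_one_div ℂ (x * y)) ?_
  rw [← gel2.liminf_eq]
  refine Filter.liminf_le_liminf ?_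
  filter_upwards [eventually_ge_atTop 1] with n hn
  have hpow : (x * y) ^ n = x ^ n * y ^ n := Commute.mul_pow (hc : Commute x y) n
  have h1 : ‖(x * y) ^ n‖₊ ≤ ‖x ^ n‖₊ * ‖y‖₊ ^ n := by
    rw [hpow]
    exact le_trans (nnnorm_mul_le _ _)
      (mul_le_mul_right (nnnorm_pow_le' y (by omega)) _)
  calc (‖(x * y) ^ n‖₊ : ENNReal) ^ (1 / n : ℝ)
      ≤ ((‖x ^ n‖₊ : ENNReal) * (‖y‖₊ : ENNReal) ^ n) ^ (1 / n : ℝ) := by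
        refine ENNReal.rpow_le_rpow ?_ (by positivity)
        exact_mod_cast h1
    _ = (‖x ^ n‖₊ : ENNReal) ^ (1 / n : ℝ) * (‖y‖₊ : ENNReal) := by
        rw [ENNReal.mul_rpow_of_nonneg _ _ (by positivity), ← ENNReal.rpow_natCast (‖y‖₊ : ENNReal) n,
          ← ENNReal.rpow_mul]
        congr 1
        field_simp
        simp

lemma eq_zero_of_norm_le_qnil_pow {x c : R} (hx : IsQuasinilpotentB x) (M : ℝ)
    (h : ∀ n : ℕ, 1 ≤ n → ‖c‖ ≤ ‖x ^ n‖ * M ^ n) : c = 0 := by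
  have gel : Tendsto (fun n : ℕ => ENNReal.ofReal (‖x ^ n‖ ^ (1 / n : ℝ))) atTop (𝓝 0) := by
    have := spectrum.pow_norm_pow_one_div_tendsto_nhds_spectralRadius x
    rwa [hx] at this
  have gelr : Tendsto (fun n : ℕ => ‖x ^ n‖ ^ (1 / n : ℝ)) atTop (𝓝 0) := by
    have h2 := (ENNReal.tendsto_toReal (by simp : (0:ENNReal) ≠ ⊤)) |>.comp gel
    simp only [Function.comp_def] at h2
    have heq : (fun n : ℕ => (ENNReal.ofReal (‖x ^ n‖ ^ (1 / n : ℝ))).toReal)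
        = fun n : ℕ => ‖x ^ n‖ ^ (1 / n : ℝ) := by
      funext m
      rw [ENNReal.toReal_ofReal (by positivity)]
    rw [heq] at h2
    simpa using h2
  have gelM : Tendsto (fun n : ℕ => ‖x ^ n‖ ^ (1 / n : ℝ) * |M|) atTop (𝓝 0) := by
    simpa using gelr.mul_const |M|
  have hev : ∀ᶠ n : ℕ in atTop, ‖c‖ ≤ (1/2) ^ n := by
    filter_upwards [gelM.eventually (gt_mem_nhds (by norm_num : (0:ℝ) < 1/2)),
      eventually_ge_atTop 1] with n hlt hn
    have hxn : ‖x ^ n‖ = (‖x ^ n‖ ^ (1 / n : ℝ)) ^ n := by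
      rw [← Real.rpow_natCast (‖x ^ n‖ ^ (1 / n : ℝ)) n, ← Real.rpow_mul (norm_nonneg _)]
      rw [one_div, inv_mul_cancel₀ (by exact_mod_cast Nat.one_le_iff_ne_zero.mp hn : (n:ℝ) ≠ 0)]
      simp
    calc ‖c‖ ≤ ‖x ^ n‖ * M ^ n := h n hn
      _ ≤ ‖x ^ n‖ * |M| ^ n := by
          refine mul_le_mul_of_nonneg_left ?_ (norm_nonneg _)
          calc M ^ n ≤ |M ^ n| := le_abs_self _
            _ = |M| ^ n := abs_pow M n
      _ = (‖x ^ n‖ ^ (1 / n : ℝ) * |M|) ^ n := by rw [mul_pow, ← hxn]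
      _ ≤ (1/2) ^ n := by
          refine pow_le_pow_left₀ ?_ (le_of_lt hlt) n
          positivity
  have : ‖c‖ ≤ 0 := by
    have hlim : Tendsto (fun n : ℕ => ((1:ℝ)/2) ^ n) atTop (𝓝 0) := by
      refine tendsto_pow_atTop_nhds_zero_of_lt_one (by norm_num) (by norm_num)
    exact ge_of_tendsto hlim hev
  simpa using le_antisymm this (norm_nonneg c)

namespace IsQP
variable {a : R}

private lemma absorb {p r : R} (hp : IsQP a p) (hr : IsQP a r) :
    p * (1 - r) = 0 ∧ (1 - r) * p = 0 := by
  obtain ⟨e, hae, hea, her, hre, _⟩ := hr.e_spec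
  have cap : Commute a p := hp.2.1
  have key : ∀ n : ℕ, 1 ≤ n → a ^ n * e ^ n = 1 - r ∧ e ^ n * a ^ n = 1 - r := by
    intro n hn
    induction n with
    | zero => omega
    | succ m ih =>
      rcases Nat.eq_or_lt_of_le hn with h1 | h1
      · constructor <;> simp [← h1, hae, hea]
      · have hm : 1 ≤ m := by omega
        obtain ⟨ih1, ih2⟩ := ih hm
        constructor
        · calc a ^ (m+1) * e ^ (m+1) = (a * a ^ m) * (e ^ m * e) := by rw [pow_succ', pow_succ]
            _ = a * ((a ^ m * e ^ m) * e) := by simp only [mul_assoc]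
            _ = a * ((1 - r) * e) := by rw [ih1]
            _ = a * (e - r * e) := by rw [sub_mul, one_mul]
            _ = a * e := by rw [hre, sub_zero]
            _ = 1 - r := hae
        · calc e ^ (m+1) * a ^ (m+1) = (e * e ^ m) * (a ^ m * a) := by rw [pow_succ', pow_succ]
            _ = e * ((e ^ m * a ^ m) * a) := by simp only [mul_assoc]
            _ = e * ((1 - r) * a) := by rw [ih2]
            _ = e * (a - r * a) := by rw [sub_mul, one_mul]
            _ = e * a - e * (r * a) := by rw [mul_sub]
            _ = e * a - (e * r) * a := by rw [mul_assoc]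
            _ = 1 - r := by rw [her, hea, zero_mul, sub_zero]
  constructor
  · refine eq_zero_of_norm_le_qnil_pow hp.2.2.1 ‖e‖ (fun n hn => ?_)
    have h1 : p * (1 - r) = (a * p) ^ n * e ^ n := by
      calc p * (1 - r) = p * (a ^ n * e ^ n) := by rw [(key n hn).1]
        _ = (p * a ^ n) * e ^ n := by rw [mul_assoc]
        _ = (a ^ n * p) * e ^ n := by rw [(cap.symm.pow_right n).eq]
        _ = (a ^ n * p ^ n) * e ^ n := by rw [idem_pow hp.1 n hn]
        _ = (a * p) ^ n * e ^ n := by rw [cap.mul_pow]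
    rw [h1]
    calc ‖(a * p) ^ n * e ^ n‖ ≤ ‖(a * p) ^ n‖ * ‖e ^ n‖ := norm_mul_le _ _
      _ ≤ ‖(a * p) ^ n‖ * ‖e‖ ^ n :=
          mul_le_mul_of_nonneg_left (norm_pow_le' e (by omega)) (norm_nonneg _)
  · refine eq_zero_of_norm_le_qnil_pow hp.2.2.1 ‖e‖ (fun n hn => ?_)
    have h1 : (1 - r) * p = e ^ n * (a * p) ^ n := by
      calc (1 - r) * p = (e ^ n * a ^ n) * p := by rw [(key n hn).2]
        _ = e ^ n * (a ^ n * p) := by rw [mul_assoc]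
        _ = e ^ n * (a ^ n * p ^ n) := by rw [idem_pow hp.1 n hn]
        _ = e ^ n * (a * p) ^ n := by rw [cap.mul_pow]
    rw [h1]
    calc ‖e ^ n * (a * p) ^ n‖ ≤ ‖e ^ n‖ * ‖(a * p) ^ n‖ := norm_mul_le _ _
      _ ≤ ‖e‖ ^ n * ‖(a * p) ^ n‖ :=
          mul_le_mul_of_nonneg_right (norm_pow_le' e (by omega)) (norm_nonneg _)
      _ = ‖(a * p) ^ n‖ * ‖e‖ ^ n := by ring

lemma unique {p r : R} (hp : IsQP a p) (hr : IsQP a r) : p = r := by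
  have h1 := (absorb hp hr).2
  have h2 := (absorb hr hp).1
  have e1 : p = r * p := by
    have := h1
    rw [sub_mul, one_mul, sub_eq_zero] at this
    exact this
  have e2 : r = r * p := by
    have := h2
    rw [mul_sub, mul_one, sub_eq_zero] at this
    exact this
  rw [e1, ← e2]

lemma bicomm {p : R} (hp : IsQP a p) {y : R} (hy : y * a = a * y) : y * p = p * y := by
  have hexp : ∀ t : ℂ, NormedSpace.exp (t • y) * p = p * NormedSpace.exp (t • y) := by
    intro t
    set z := (NormedSpace.isUnit_exp_of_mem_ball (𝕂 := ℂ) (x := t • y)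
      ((NormedSpace.expSeries_radius_eq_top ℂ R).symm ▸ edist_lt_top _ _)).unit with hz
    have hzv : (z : R) = NormedSpace.exp (t • y) := rfl
    have hza : (z : R) * a = a * (z : R) := by
      rw [hzv]
      exact ((Commute.smul_left (hy : Commute y a) t).exp_left).eq
    have := unique (hp.conj z hza) hp
    have h2 : (z : R) * p = p * (z : R) := by
      calc (z : R) * p = ((z : R) * p * (↑z⁻¹ : R)) * (z : R) := by
            rw [Units.inv_mul_cancel_right]
        _ = p * (z : R) := by rw [this]
    rw [← hzv]
    exact h2
  have hF : HasDerivAt (fun t : ℂ => NormedSpace.exp (t • y) * p) (y * p) 0 := by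
    have := (hasDerivAt_exp_smul_const (𝕂 := ℂ) y (0:ℂ)).mul_const p
    simpa using this
  have hG : HasDerivAt (fun t : ℂ => NormedSpace.exp (t • y) * p) (p * y) 0 := by
    have hG' : HasDerivAt (fun t : ℂ => p * NormedSpace.exp (t • y)) (p * y) 0 := by
      have := (hasDerivAt_exp_smul_const (𝕂 := ℂ) y (0:ℂ)).const_mul p
      simpa [mul_assoc] using this
    refine HasDerivAt.congr_of_eventuallyEq hG' ?_
    filter_upwards with t
    exact hexp t
  exact (hF.unique hG)

end IsQP

lemma exists_gd_iff_exists_qp {x : R} :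
    (∃ e, IsGDrazinInverseB x e) ↔ ∃ p, IsQP x p := by
  constructor
  · rintro ⟨e, heq, hbi, hq⟩
    have hex : e * x = x * e := hbi x rfl
    have hxexe : (x * e) * (x * e) = x * e := by
      rw [mul_assoc x e (x * e), ← mul_assoc e x e, ← heq]
    set p : R := 1 - x * e with hp
    have hpp : p * p = p := by
      have h0 : (1 - x*e) * (1 - x*e) = 1 - x*e - (x*e - x*e*(x*e)) := by noncomm_ring
      rw [hp, h0, hxexe]
      abel
    have hpx : p * x = x * p := by
      rw [hp, sub_mul, mul_sub, one_mul, mul_one, mul_assoc x e x, hex]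
    have hxp : x * p = x - x ^ 2 * e := by
      rw [hp, mul_sub, mul_one, ← mul_assoc, ← pow_two]
    have hqxp : IsQuasinilpotentB (x * p) := by rw [hxp]; exact hq
    have hep : e * p = 0 := by
      rw [hp, mul_sub, mul_one, ← mul_assoc, ← heq, sub_self]
    have hpe : p * e = 0 := by
      rw [hp, sub_mul, one_mul, ← hex, ← heq, sub_self]
    obtain ⟨m, hm⟩ := unit_one_add_qnil hqxp
    have hfwd : (x + p) * (e + p) = (m : R) := by
      rw [add_mul, mul_add, mul_add, hpe, hpp, hm]
      have h0 : x * e = 1 - p := by rw [hp]; abel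
      rw [h0]
      abel
    have hbwd : (e + p) * (x + p) = (m : R) := by
      rw [add_mul, mul_add, mul_add, hep, hpp, hm, hex, hpx]
      have h0 : x * e = 1 - p := by rw [hp]; abel
      rw [h0]
      abel
    have hcm : Commute (x + p) (m : R) := by
      rw [Commute, SemiconjBy]
      conv_lhs => rw [← hbwd]
      conv_rhs => rw [← hfwd]
      rw [mul_assoc]
    have hunit : IsUnit (x + p) := by
      refine ⟨⟨x + p, (e + p) * (↑m⁻¹ : R), ?_, ?_⟩, rfl⟩
      · rw [← mul_assoc, hfwd, m.mul_inv]
      · calc (e + p) * (↑m⁻¹ : R) * (x + p)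
            = (e + p) * ((↑m⁻¹ : R) * (x + p)) := by rw [mul_assoc]
          _ = (e + p) * ((x + p) * (↑m⁻¹ : R)) := by rw [(hcm.units_inv_right.eq).symm]
          _ = (e + p) * (x + p) * (↑m⁻¹ : R) := by rw [mul_assoc]
          _ = 1 := by rw [hbwd, m.mul_inv]
    exact ⟨p, hpp, hpx.symm, hqxp, hunit⟩
  · rintro ⟨p, hqp⟩
    obtain ⟨e, hae, hea, hep, hpe, hcomm⟩ := hqp.e_spec
    refine ⟨e, ?_, ?_, ?_⟩
    · calc e = e - p * e := by rw [hpe, sub_zero]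
        _ = (1 - p) * e := by rw [sub_mul, one_mul]
        _ = e * x * e := by rw [← hea]
    · intro y hy
      have hyp : y * p = p * y := hqp.bicomm hy
      exact (hcomm y hy hyp).symm
    · have hh : x - x ^ 2 * e = x * p := by
        rw [pow_two, mul_assoc, hae, mul_sub, mul_one, sub_sub_cancel]
      rw [hh]
      exact hqp.2.2.1
lemma qnil_add_nilp {x y : R} (hx : IsQuasinilpotentB x) (hyx : y * x = 0)
    (hyy : y * y = 0) : IsQuasinilpotentB (x + y) := by
  rw [qnilB_iff] at hx ⊢
  intro μ hμ
  have hfac : (1 - μ⁻¹ • y) * (μ • (1:R) - x) = μ • (1:R) - (x + y) := by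
    rw [sub_mul, one_mul, mul_sub, smul_mul_assoc, smul_mul_assoc, hyx, smul_zero,
      mul_smul_comm, mul_one, smul_smul, inv_mul_cancel₀ hμ, one_smul]
    abel
  have hz : (μ⁻¹ • y) * (μ⁻¹ • y) = 0 := by
    rw [smul_mul_assoc, mul_smul_comm, hyy, smul_zero, smul_zero]
  have hu1 : IsUnit (1 - μ⁻¹ • y) := by
    refine ⟨⟨1 - μ⁻¹ • y, 1 + μ⁻¹ • y, ?_, ?_⟩, rfl⟩
    · have h0 : (1 - μ⁻¹ • y) * (1 + μ⁻¹ • y) = 1 - (μ⁻¹ • y) * (μ⁻¹ • y) := by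
        noncomm_ring
        try module
      rw [h0, hz, sub_zero]
    · have h0 : (1 + μ⁻¹ • y) * (1 - μ⁻¹ • y) = 1 - (μ⁻¹ • y) * (μ⁻¹ • y) := by
        noncomm_ring
        try module
      rw [h0, hz, sub_zero]
  rw [← hfac]
  exact hu1.mul (hx μ hμ)

namespace IsQP
variable {a b p : R}

/-- Cline-type transfer at the point `0`. -/
lemma cline (h : IsQP (a * b) p) : ∃ q, IsQP (b * a) q := by
  obtain ⟨e, hae, hea, hep, hpe, hcomm⟩ := h.e_spec
  have hcom : e * (a * b) = (a * b) * e := hea.trans hae.symm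
  have he1p : e * (1 - p) = e := by rw [mul_sub, mul_one, hep, sub_zero]
  set q : R := 1 - b * e * a with hq
  -- key : (b*e*a) * (b*e*a) = b*e*a
  have hkey : (b * e * a) * (b * e * a) = b * e * a := by
    calc (b * e * a) * (b * e * a) = b * (e * ((a * b) * e)) * a := by
          simp only [mul_assoc]
      _ = b * (e * (1 - p)) * a := by rw [hae]
      _ = b * e * a := by rw [he1p]
  have hqq : q * q = q := by
    have h0 : (1 - b*e*a) * (1 - b*e*a)
        = 1 - b*e*a - (b*e*a - (b*e*a) * (b*e*a)) := by noncomm_ring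
    rw [hq, h0, hkey]
    abel
  have hcomm2 : (b * a) * q = q * (b * a) := by
    have h1 : (b * a) * (b * e * a) = (b * e * a) * (b * a) := by
      calc (b * a) * (b * e * a) = b * ((a * b) * e) * a := by simp only [mul_assoc]
        _ = b * (e * (a * b)) * a := by rw [← hcom]
        _ = (b * e * a) * (b * a) := by simp only [mul_assoc]
    rw [hq, mul_sub, sub_mul, mul_one, one_mul, h1]
  have hqnil : IsQuasinilpotentB ((b * a) * q) := by
    have h1 : (b * a) * q = (b * p) * a := by
      have h2 : (b * a) * (b * e * a) = b * ((a * b) * e) * a := by simp only [mul_assoc]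
      rw [hq, mul_sub, mul_one, h2, hae]
      noncomm_ring
    rw [h1]
    have h3 : IsQuasinilpotentB (a * (b * p)) := by
      rw [← mul_assoc]
      exact h.2.2.1
    exact qnilB_swap h3
  have hunit : IsUnit (b * a + q) := by
    have key1 : (1:ℂ) • (1:R) - ((e - 1) * a) * b = a * b + p := by
      rw [one_smul, mul_assoc, sub_mul, one_mul, hea]
      abel
    have h1 : IsUnit ((1:ℂ) • (1:R) - ((e - 1) * a) * b) := by
      rw [key1]; exact h.2.2.2
    have h2 := unit_smul_sub_swap one_ne_zero h1
    have key2 : (1:ℂ) • (1:R) - b * ((e - 1) * a) = b * a + q := by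
      rw [one_smul, hq]; noncomm_ring
    rwa [key2] at h2
  exact ⟨q, hqq, hcomm2, hqnil, hunit⟩

/-- Jacobson-type transfer at a nonzero point. -/
lemma jacobson {μ : ℂ} (hμ : μ ≠ 0)
    (h : IsQP (μ • (1:R) - a * b) p) : ∃ q, IsQP (μ • (1:R) - b * a) q := by
  obtain ⟨hpp, hαp, hqnl, hu⟩ := h
  have main : ∀ α w : R, α = μ • (1:R) - a * b → w = α * p →
      ∃ q, IsQP (μ • (1:R) - b * a) q := by
    intro α w hα hw
    have hαp2 : α * p = p * α := by rw [hα]; exact hαp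
    have hqnl2 : IsQuasinilpotentB w := by rw [hw, hα]; exact hqnl
    have hu2 : IsUnit (α + p) := by rw [hα]; exact hu
    have hV : IsUnit (μ • (1:R) - w) := qnilB_iff.1 hqnl2 μ hμ
    obtain ⟨V, hVv⟩ := hV
    have hwp : w * p = w := by rw [hw, mul_assoc, hpp]
    have hpw : p * w = w := by rw [hw, ← mul_assoc, ← hαp2, mul_assoc, hpp]
    have cpV : Commute p (V : R) := by
      rw [Commute, SemiconjBy, hVv, mul_sub, sub_mul, mul_smul_comm, smul_mul_assoc,
        mul_one, one_mul, hpw, hwp]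
    have hpab : p * (a * b) = (a * b) * p := by
      have h1 : p * (μ • (1:R) - α) = (μ • (1:R) - α) * p := by
        rw [mul_sub, sub_mul, mul_smul_comm, smul_mul_assoc, mul_one, one_mul, hαp2]
      have h2 : μ • (1:R) - α = a * b := by rw [hα]; abel
      rwa [h2] at h1
    have habp : (a * b) * p = μ • p - w := by
      have h2 : μ • (1:R) - α = a * b := by rw [hα]; abel
      rw [← h2, sub_mul, smul_mul_assoc, one_mul, ← hw]
    have hVp : (V : R) * p = μ • p - w := by
      rw [hVv, sub_mul, smul_mul_assoc, one_mul, hwp]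
    have main2 : ∀ X : R, X = p * (↑V⁻¹ : R) → ∃ q, IsQP (μ • (1:R) - b * a) q := by
      intro X hX
      have hpVi : X = (↑V⁻¹ : R) * p := by rw [hX, cpV.units_inv_right.eq]
      have hXab : X * (a * b) = p := by
        calc X * (a * b) = (↑V⁻¹ : R) * (p * (a * b)) := by rw [hpVi, mul_assoc]
          _ = (↑V⁻¹ : R) * ((V : R) * p) := by rw [hpab, hVp, habp]
          _ = p := by rw [← mul_assoc, V.inv_mul, one_mul]
      have habX : (a * b) * X = p := by
        calc (a * b) * X = ((a * b) * p) * (↑V⁻¹ : R) := by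
              rw [hX]; simp only [mul_assoc]
          _ = ((V : R) * p) * (↑V⁻¹ : R) := by rw [habp, hVp]
          _ = ((V : R) * (↑V⁻¹ : R)) * p := by
              rw [mul_assoc, mul_assoc, ← cpV.units_inv_right.eq]
          _ = p := by rw [V.mul_inv, one_mul]
      have hpX : p * X = X := by rw [hX, ← mul_assoc, hpp]
      have hXp : X * p = X := by rw [hpVi, mul_assoc, hpp]
      have inner : a * (b * (X * a)) = p * a := by
        rw [← mul_assoc, ← mul_assoc, habX]
      refine ⟨b * X * a, ?_, ?_, ?_, ?_⟩
      · -- idempotent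
        show (b * X * a) * (b * X * a) = b * X * a
        calc (b * X * a) * (b * X * a) = b * (X * (a * (b * (X * a)))) := by
              simp only [mul_assoc]
          _ = b * (X * (p * a)) := by rw [inner]
          _ = b * ((X * p) * a) := by rw [mul_assoc]
          _ = b * (X * a) := by rw [hXp]
          _ = b * X * a := by rw [mul_assoc]
      · -- commutes
        have hbaq : (b * a) * (b * X * a) = (b * X * a) * (b * a) := by
          calc (b * a) * (b * X * a) = b * (a * (b * (X * a))) := by simp only [mul_assoc]
            _ = b * (p * a) := by rw [inner]
            _ = b * ((X * (a * b)) * a) := by rw [hXab]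
            _ = (b * X * a) * (b * a) := by simp only [mul_assoc]
        rw [sub_mul, mul_sub, smul_mul_assoc, one_mul, mul_smul_comm, mul_one, hbaq]
      · -- quasinilpotent part
        have hbpa : (b * a) * (b * X * a) = b * (p * a) := by
          calc (b * a) * (b * X * a) = b * (a * (b * (X * a))) := by simp only [mul_assoc]
            _ = b * (p * a) := by rw [inner]
        have hXw : μ • X - p = w * (↑V⁻¹ : R) := by
          have h5 : μ • X - p = (μ • p - (V:R) * p) * (↑V⁻¹ : R) := by
            rw [sub_mul, smul_mul_assoc, ← hX]
            congr 1
            rw [mul_assoc, cpV.units_inv_right.eq, ← mul_assoc, V.mul_inv, one_mul]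
          rw [h5, hVp, show μ • p - (μ • p - w) = w by abel]
        have hform : (μ • (1:R) - b * a) * (b * X * a) = b * (w * (↑V⁻¹ : R) * a) := by
          rw [sub_mul, smul_mul_assoc, one_mul, hbpa, ← hXw]
          rw [sub_mul, mul_sub, smul_mul_assoc, mul_smul_comm]
          simp only [mul_assoc]
        rw [hform]
        have hcw1 : Commute w (↑V⁻¹ : R) := by
          have : Commute w (V : R) := by
            have h6 : Commute w (μ • (1:R) - w) :=
              ((Commute.one_right w).smul_right μ).sub_right (Commute.refl w)
            rwa [← hVv] at h6
          exact this.units_inv_right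
        have hcw2 : Commute w (a * b) := by
          have h7 : Commute α (a * b) := by
            have : Commute (μ • (1:R) - a * b) (a * b) :=
              ((Commute.one_left (a*b)).smul_left μ).sub_left (Commute.refl (a*b))
            rwa [← hα] at this
          have h8 : Commute p (a * b) := hpab
          have := h7.mul_left h8
          rwa [← hw] at this
        have hswap : IsQuasinilpotentB ((w * (↑V⁻¹ : R) * a) * b) := by
          have h9 : (w * (↑V⁻¹ : R) * a) * b = w * ((↑V⁻¹ : R) * (a * b)) := by
            simp only [mul_assoc]
          rw [h9]
          exact qnilB_mul_commute hqnl2 (hcw1.mul_right hcw2).eq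
        exact qnilB_swap hswap
      · -- unit part
        have key1 : μ • (1:R) - ((1 - X) * a) * b = α + p := by
          rw [mul_assoc, sub_mul, one_mul, hXab, hα]
          abel
        have h1 : IsUnit (μ • (1:R) - ((1 - X) * a) * b) := by
          rw [key1]; exact hu2
        have h2 := unit_smul_sub_swap hμ h1
        have key2 : μ • (1:R) - b * ((1 - X) * a) = (μ • (1:R) - b * a) + b * X * a := by
          noncomm_ring
        rwa [key2] at h2
    exact main2 _ rfl
  exact main _ _ rfl rfl

/-- Perturbation transfer at `0`: if `N = P - Q` kills both `P` and `Q`,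
then a Koliha decomposition for `Q` yields one for `P`. -/
lemma perturb0 {P Q p : R} (hNP : (P - Q) * P = 0) (hNQ0 : (P - Q) * Q = 0)
    (h : IsQP Q p) : ∃ q, IsQP P q := by
  obtain ⟨e, hae, hea, hep, hpe, _⟩ := h.e_spec
  have hpp : p * p = p := h.1
  have hQp : Q * p = p * Q := h.2.1
  have hqnl : IsQuasinilpotentB (Q * p) := h.2.2.1
  have hu : IsUnit (Q + p) := h.2.2.2
  have main : ∀ N : R, N = P - Q → ∃ q, IsQP P q := by
    intro N hN
    have hNQ : N * Q = 0 := by rw [hN]; exact hNQ0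
    have hNN : N * N = 0 := by
      rw [hN, mul_sub, hNP, hNQ0, sub_zero]
    have hPQ : P = Q + N := by rw [hN]; abel
    have hN1 : N * (1 - p) = 0 := by rw [← hae, ← mul_assoc, hNQ, zero_mul]
    have hNp : N * p = N := by
      have h' := hN1
      rw [mul_sub, mul_one, sub_eq_zero] at h'
      exact h'.symm
    have h1pe : (1 - p) * e = e := by rw [sub_mul, one_mul, hpe, sub_zero]
    have hNe : N * e = 0 := by rw [← h1pe, ← mul_assoc, hN1, zero_mul]
    have hqq : (p - e * N) * (p - e * N) = p - e * N := by
      have h0 : (p - e * N) * (p - e * N)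
          = p * p - (p * e) * N - e * (N * p) + e * ((N * e) * N) := by noncomm_ring
      rw [h0, hpp, hpe, hNp, hNe]
      simp only [zero_mul, mul_zero]
      abel
    have hA : (p - e * N) * P = p * Q + p * N := by
      have h0 : (p - e * N) * (Q + N)
          = p * Q + p * N - e * (N * Q) - e * (N * N) := by noncomm_ring
      rw [hPQ, h0, hNQ, hNN]
      simp only [zero_mul, mul_zero]
      abel
    have hB : P * (p - e * N) = p * Q + p * N := by
      have h0 : (Q + N) * (p - e * N)
          = Q * p + N * p - (Q * e) * N - (N * e) * N := by noncomm_ring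
      rw [hPQ, h0, hae, hNp, hNe]
      simp only [zero_mul, mul_zero]
      rw [sub_mul, one_mul, hQp]
      abel
    have hcm : P * (p - e * N) = (p - e * N) * P := by rw [hA, hB]
    have hqnil : IsQuasinilpotentB (P * (p - e * N)) := by
      rw [hB, ← hQp]
      have hyx : (p * N) * (Q * p) = 0 := by
        rw [mul_assoc, ← mul_assoc N Q p, hNQ, zero_mul, mul_zero]
      have hyy : (p * N) * (p * N) = 0 := by
        rw [mul_assoc, ← mul_assoc N p N, hNp, hNN, mul_zero]
      exact qnil_add_nilp hqnl hyx hyy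
    have hunit : IsUnit (P + (p - e * N)) := by
      obtain ⟨u, huv⟩ := hu
      have hNu : N * (u : R) = N := by rw [huv, mul_add, hNQ, hNp, zero_add]
      have hNui : N * (↑u⁻¹ : R) = N := by
        conv_lhs => rw [← hNu]
        rw [mul_assoc, u.mul_inv, mul_one]
      have hm1 : N * ((1 - e) * N) = 0 := by
        rw [← mul_assoc, mul_sub, mul_one, hNe, sub_zero, hNN]
      have hmm : ((↑u⁻¹ : R) * ((1 - e) * N)) * ((↑u⁻¹ : R) * ((1 - e) * N)) = 0 := by
        calc ((↑u⁻¹ : R) * ((1 - e) * N)) * ((↑u⁻¹ : R) * ((1 - e) * N))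
            = (↑u⁻¹ : R) * ((1 - e) * ((N * (↑u⁻¹ : R)) * ((1 - e) * N))) := by
              simp only [mul_assoc]
          _ = (↑u⁻¹ : R) * ((1 - e) * (N * ((1 - e) * N))) := by rw [hNui]
          _ = 0 := by rw [hm1, mul_zero, mul_zero]
      have hfac : P + (p - e * N) = (u : R) * (1 + (↑u⁻¹ : R) * ((1 - e) * N)) := by
        rw [mul_add, mul_one, ← mul_assoc, u.mul_inv, one_mul, huv, hPQ]
        noncomm_ring
      rw [hfac]
      refine u.isUnit.mul ?_
      refine ⟨⟨_, 1 - (↑u⁻¹ : R) * ((1 - e) * N), ?_, ?_⟩, rfl⟩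
      · have h0 : ∀ m : R, (1 + m) * (1 - m) = 1 - m * m := by intro m; noncomm_ring
        rw [h0, hmm, sub_zero]
      · have h0 : ∀ m : R, (1 - m) * (1 + m) = 1 - m * m := by intro m; noncomm_ring
        rw [h0, hmm, sub_zero]
    exact ⟨p - e * N, hqq, hcm, hqnil, hunit⟩
  exact main _ rfl

/-- Perturbation transfer at a nonzero point. -/
lemma perturbNZ {μ : ℂ} (hμ : μ ≠ 0) {P Q p : R} (hNP : (P - Q) * P = 0)
    (hNQ0 : (P - Q) * Q = 0) (h : IsQP (μ • (1:R) - Q) p) :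
    ∃ q, IsQP (μ • (1:R) - P) q := by
  obtain ⟨e, hae, hea, hep, hpe, _⟩ := h.e_spec
  have hpp : p * p = p := h.1
  have hap : (μ • (1:R) - Q) * p = p * (μ • (1:R) - Q) := h.2.1
  have hqnl : IsQuasinilpotentB ((μ • (1:R) - Q) * p) := h.2.2.1
  have hu : IsUnit ((μ • (1:R) - Q) + p) := h.2.2.2
  have main : ∀ α N w : R, α = μ • (1:R) - Q → N = P - Q → w = α * p →
      ∃ q, IsQP (μ • (1:R) - P) q := by
    intro α N w hα hN hw
    have hae2 : α * e = 1 - p := by rw [hα]; exact hae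
    have hea2 : e * α = 1 - p := by rw [hα]; exact hea
    have hap2 : α * p = p * α := by rw [hα]; exact hap
    have hqnl2 : IsQuasinilpotentB w := by rw [hw, hα]; exact hqnl
    have hu2 : IsUnit (α + p) := by rw [hα]; exact hu
    have hNQ : N * Q = 0 := by rw [hN]; exact hNQ0
    have hNN : N * N = 0 := by rw [hN, mul_sub, hNP, hNQ0, sub_zero]
    have hb : μ • (1:R) - P = α - N := by rw [hα, hN]; abel
    have hNα : N * α = μ • N := by
      rw [hα, mul_sub, mul_smul_comm, mul_one, hNQ, sub_zero]
    have hN1p : N * (1 - p) = μ • (N * e) := by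
      rw [← hae2, ← mul_assoc, hNα, smul_mul_assoc]
    have hNp' : N * p = N - μ • (N * e) := by
      have h' := hN1p
      rw [mul_sub, mul_one] at h'
      rw [← h']
      abel
    have h1pp : (1 - p) * p = 0 := by rw [sub_mul, one_mul, hpp, sub_self]
    have hsw : (N * e) * w = 0 := by
      rw [hw, ← mul_assoc, mul_assoc N e α, hea2, mul_assoc, h1pp, mul_zero]
    have hNw : N * w = μ • (N * p) := by
      rw [hw, ← mul_assoc, hNα, smul_mul_assoc]
    have hV : IsUnit (μ • (1:R) - w) := qnilB_iff.1 hqnl2 μ hμ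
    obtain ⟨V, hVv⟩ := hV
    have hsV : (N * e) * (V : R) = μ • (N * e) := by
      rw [hVv, mul_sub, mul_smul_comm, mul_one, hsw, sub_zero]
    have hsVi : (N * e) * (↑V⁻¹ : R) = μ⁻¹ • (N * e) := by
      have heq : N * e = μ • ((N * e) * (↑V⁻¹ : R)) := by
        conv_lhs => rw [← Units.mul_inv_cancel_right (N * e) V]
        rw [hsV, smul_mul_assoc]
      conv_rhs => rw [heq]
      rw [smul_smul, inv_mul_cancel₀ hμ, one_smul]
    have hNV : N * (V : R) = (μ * μ) • (N * e) := by
      rw [hVv, mul_sub, mul_smul_comm, mul_one, hNw, hNp']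
      rw [smul_sub, smul_smul]
      abel
    have hNs : N = μ • (N * e) := by
      conv_lhs => rw [← Units.mul_inv_cancel_right N V]
      rw [hNV, smul_mul_assoc, hsVi, smul_smul]
      rw [mul_assoc, mul_inv_cancel₀ hμ, mul_one]
    have hNp0 : N * p = 0 := by rw [hNp', ← hNs, sub_self]
    have hNe' : N * e = μ⁻¹ • N := by
      conv_rhs => rw [hNs]
      rw [smul_smul, inv_mul_cancel₀ hμ, one_smul]
    -- commutation facts for p, w, V
    have hwp : w * p = w := by rw [hw, mul_assoc, hpp]
    have hpw : p * w = w := by rw [hw, ← mul_assoc, ← hap2, mul_assoc, hpp]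
    have cpV : Commute p (V : R) := by
      rw [Commute, SemiconjBy, hVv, mul_sub, sub_mul, mul_smul_comm, smul_mul_assoc,
        mul_one, one_mul, hpw, hwp]
    have hVp : (V : R) * p = μ • p - w := by
      rw [hVv, sub_mul, smul_mul_assoc, one_mul, hwp]
    have main2 : ∀ X : R, X = p * (↑V⁻¹ : R) → ∃ q, IsQP (μ • (1:R) - P) q := by
      intro X hX
      have hpVi : X = (↑V⁻¹ : R) * p := by rw [hX, cpV.units_inv_right.eq]
      have hpX : p * X = X := by rw [hX, ← mul_assoc, hpp]
      have hNX : N * X = 0 := by rw [hX, ← mul_assoc, hNp0, zero_mul]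
      have hXw : μ • X - p = w * (↑V⁻¹ : R) := by
        have h5 : μ • X - p = (μ • p - (V:R) * p) * (↑V⁻¹ : R) := by
          rw [sub_mul, smul_mul_assoc, ← hX]
          congr 1
          rw [mul_assoc, cpV.units_inv_right.eq, ← mul_assoc, V.mul_inv, one_mul]
        rw [h5, hVp, show μ • p - (μ • p - w) = w by abel]
      have hαX : α * X = w * (↑V⁻¹ : R) := by rw [hX, ← mul_assoc, ← hw]
      have hNwi : N * (w * (↑V⁻¹ : R)) = 0 := by
        rw [← mul_assoc, hNw, hNp0, smul_zero, zero_mul]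
      -- the candidate idempotent
      have hqq : (p + X * N) * (p + X * N) = p + X * N := by
        have h0 : (p + X * N) * (p + X * N)
            = p * p + (p * X) * N + X * (N * p) + X * ((N * X) * N) := by noncomm_ring
        rw [h0, hpp, hpX, hNp0, hNX]
        simp only [zero_mul, mul_zero]
        abel
      have hA : (p + X * N) * (μ • (1:R) - P) = α * p - p * N + μ • (X * N) := by
        rw [hb]
        have h0 : (p + X * N) * (α - N)
            = p * α + X * (N * α) - p * N - X * (N * N) := by noncomm_ring
        rw [h0, hNα, hNN, hap2]
        simp only [mul_zero, mul_smul_comm]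
        rw [← hap2]
        abel
      have hB : (μ • (1:R) - P) * (p + X * N) = α * p + (w * (↑V⁻¹ : R)) * N := by
        rw [hb]
        have h0 : (α - N) * (p + X * N)
            = α * p + (α * X) * N - N * p - (N * X) * N := by noncomm_ring
        rw [h0, hαX, hNp0, hNX]
        simp only [zero_mul, mul_zero]
        abel
      have hcm : (μ • (1:R) - P) * (p + X * N) = (p + X * N) * (μ • (1:R) - P) := by
        rw [hA, hB, ← hXw, sub_mul, smul_mul_assoc]
        abel
      have hqnil : IsQuasinilpotentB ((μ • (1:R) - P) * (p + X * N)) := by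
        rw [hB, ← hw]
        have hyx : ((w * (↑V⁻¹ : R)) * N) * w = 0 := by
          rw [mul_assoc, hNw, hNp0, smul_zero, mul_zero]
        have hyy : ((w * (↑V⁻¹ : R)) * N) * ((w * (↑V⁻¹ : R)) * N) = 0 := by
          calc ((w * (↑V⁻¹ : R)) * N) * ((w * (↑V⁻¹ : R)) * N)
              = (w * (↑V⁻¹ : R)) * ((N * (w * (↑V⁻¹ : R))) * N) := by
                simp only [mul_assoc]
            _ = 0 := by rw [hNwi, zero_mul, mul_zero]
        exact qnil_add_nilp hqnl2 hyx hyy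
      have hunit : IsUnit ((μ • (1:R) - P) + (p + X * N)) := by
        obtain ⟨u, huv⟩ := hu2
        have hNu : N * (u : R) = μ • N := by
          rw [huv, mul_add, hNα, hNp0, add_zero]
        have hNui : N * (↑u⁻¹ : R) = μ⁻¹ • N := by
          have heq : N = μ • (N * (↑u⁻¹ : R)) := by
            conv_lhs => rw [← Units.mul_inv_cancel_right N u]
            rw [hNu, smul_mul_assoc]
          conv_rhs => rw [heq]
          rw [smul_smul, inv_mul_cancel₀ hμ, one_smul]
        have hm1 : N * ((X - 1) * N) = 0 := by
          rw [← mul_assoc, mul_sub, mul_one, hNX, zero_sub, neg_mul, hNN, neg_zero]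
        have hmm : ((↑u⁻¹ : R) * ((X - 1) * N)) * ((↑u⁻¹ : R) * ((X - 1) * N)) = 0 := by
          calc ((↑u⁻¹ : R) * ((X - 1) * N)) * ((↑u⁻¹ : R) * ((X - 1) * N))
              = (↑u⁻¹ : R) * ((X - 1) * ((N * (↑u⁻¹ : R)) * ((X - 1) * N))) := by
                simp only [mul_assoc]
            _ = (↑u⁻¹ : R) * ((X - 1) * ((μ⁻¹ • N) * ((X - 1) * N))) := by rw [hNui]
            _ = 0 := by rw [smul_mul_assoc, hm1, smul_zero, mul_zero, mul_zero]
        have hfac : (μ • (1:R) - P) + (p + X * N)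
            = (u : R) * (1 + (↑u⁻¹ : R) * ((X - 1) * N)) := by
          rw [mul_add, mul_one, ← mul_assoc, u.mul_inv, one_mul, huv, hb]
          noncomm_ring
        rw [hfac]
        refine u.isUnit.mul ?_
        refine ⟨⟨_, 1 - (↑u⁻¹ : R) * ((X - 1) * N), ?_, ?_⟩, rfl⟩
        · have h0 : ∀ m : R, (1 + m) * (1 - m) = 1 - m * m := by intro m; noncomm_ring
          rw [h0, hmm, sub_zero]
        · have h0 : ∀ m : R, (1 - m) * (1 + m) = 1 - m * m := by intro m; noncomm_ring
          rw [h0, hmm, sub_zero]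
      exact ⟨p + X * N, hqq, hcm, hqnil, hunit⟩
    exact main2 _ rfl
  exact main _ _ _ rfl rfl rfl

end IsQP
end Complete
end QP

section Main
variable {R : Type*} [NormedRing R] [NormedAlgebra ℂ R] [CompleteSpace R]

/-- transfer of the Koliha decomposition along Cline/Jacobson. -/
lemma hasQP_swap {a b : R} (lam : ℂ) (h : ∃ p, IsQP (lam • (1:R) - a * b) p) :
    ∃ q, IsQP (lam • (1:R) - b * a) q := by
  obtain ⟨p, hp⟩ := h
  rcases eq_or_ne lam 0 with h0 | h0
  · subst h0
    rw [zero_smul, zero_sub] at hp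
    have hp2 : IsQP (a * b) p := by
      have := hp.neg
      rwa [neg_neg] at this
    obtain ⟨q, hq⟩ := hp2.cline
    refine ⟨q, ?_⟩
    rw [zero_smul, zero_sub]
    exact hq.neg
  · exact IsQP.jacobson h0 hp

/-- transfer along a perturbation `P = Q + N` with `N * P = N * Q = 0`. -/
lemma hasQP_perturb {P Q : R} (hNP : (P - Q) * P = 0) (hNQ : (P - Q) * Q = 0) (lam : ℂ)
    (h : ∃ p, IsQP (lam • (1:R) - Q) p) : ∃ q, IsQP (lam • (1:R) - P) q := by
  obtain ⟨p, hp⟩ := h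
  rcases eq_or_ne lam 0 with h0 | h0
  · subst h0
    rw [zero_smul, zero_sub] at hp
    have hp2 : IsQP Q p := by
      have := hp.neg
      rwa [neg_neg] at this
    obtain ⟨q, hq⟩ := IsQP.perturb0 hNP hNQ hp2
    refine ⟨q, ?_⟩
    rw [zero_smul, zero_sub]
    exact hq.neg
  · exact IsQP.perturbNZ h0 hNP hNQ hp

end Main

theorem stmt_14 {X : Type*} [NormedAddCommGroup X] [NormedSpace ℂ X] [CompleteSpace X]
    (A B C D : X →L[ℂ] X)
    (h1 : (A * C) ^ 2 = (D * B) * (A * C))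
    (h2 : (D * B) ^ 2 = (A * C) * (D * B))
    (h3 : B * (A * C) * A = B * (D * B) * A)
    (h4 : C * (A * C) * D = C * (D * B) * D) :
    gDrazinSpectrum (B * D) = gDrazinSpectrum (A * C) := by
  have hNP : ((A * C) - (D * B)) * (A * C) = 0 := by
    rw [sub_mul, ← pow_two, h1, sub_self]
  have hNQ : ((A * C) - (D * B)) * (D * B) = 0 := by
    rw [sub_mul, ← pow_two, h2, sub_self]
  have hNP' : ((D * B) - (A * C)) * (D * B) = 0 := by
    rw [sub_mul, ← pow_two, h2, sub_self]
  have hNQ' : ((D * B) - (A * C)) * (A * C) = 0 := by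
    rw [sub_mul, ← pow_two, h1, sub_self]
  ext lam
  simp only [gDrazinSpectrum, Set.mem_setOf_eq]
  rw [not_iff_not, exists_gd_iff_exists_qp, exists_gd_iff_exists_qp]
  constructor
  · intro h
    exact hasQP_perturb hNP hNQ lam (hasQP_swap (a := B) (b := D) lam h)
  · intro h
    exact hasQP_swap (a := D) (b := B) lam (hasQP_perturb hNP' hNQ' lam h)
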